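/- Let L>0, Ω=(0,L)×(-1,1), and let μ,ν,c₀,h>0 satisfy 2μc₀²h² ≤ ν/16 and μ ≥ 2ν. Let w₁ be a smooth Ω-periodic scalar function and let J be a square-integrable function on Ω satisfying the second-order approximation bound ‖J - w₁‖ ≤ c₀h(‖w₁‖² + ‖∇w₁‖²)^{1/2} + c₀²h²(‖w₁‖² + ‖∇w₁‖² + 2‖Δw₁‖²)^{1/2}. Then μ∫_Ω J(x) Δw₁(x) dx ≤ (3ν/8)‖Δw₁‖² + (μ/8)‖w₁‖² - (7μ/8)‖∇w₁‖². -/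

import Mathlib

open MeasureTheory Real Filter

noncomputable section

/-- First partial derivative. -/
def d1 (f : ℝ × ℝ → ℝ) (p : ℝ × ℝ) : ℝ := fderiv ℝ f p (1, 0)

/-- Second partial derivative. -/
def d2 (f : ℝ × ℝ → ℝ) (p : ℝ × ℝ) : ℝ := fderiv ℝ f p (0, 1)

/-- Laplacian. -/
def lap (f : ℝ × ℝ → ℝ) (p : ℝ × ℝ) : ℝ := d1 (d1 f) p + d2 (d2 f) p

/-- The domain Ω = (0,L) × (-1,1). -/
def Omg (L : ℝ) : Set (ℝ × ℝ) := Set.Ioo 0 L ×ˢ Set.Ioo (-1) 1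

/-- Squared L² norm over Ω. -/
def nrmSq (L : ℝ) (f : ℝ × ℝ → ℝ) : ℝ := ∫ p in Omg L, (f p) ^ 2

/-- L² norm over Ω. -/
def nrm (L : ℝ) (f : ℝ × ℝ → ℝ) : ℝ := Real.sqrt (nrmSq L f)

/-- Squared L² norm of the gradient over Ω. -/
def gradNrmSq (L : ℝ) (f : ℝ × ℝ → ℝ) : ℝ := ∫ p in Omg L, ((d1 f p) ^ 2 + (d2 f p) ^ 2)

/-- L² norm of the gradient over Ω. -/
def gradNrm (L : ℝ) (f : ℝ × ℝ → ℝ) : ℝ := Real.sqrt (gradNrmSq L f)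

/-- Squared L² norm of the Laplacian over Ω. -/
def lapNrmSq (L : ℝ) (f : ℝ × ℝ → ℝ) : ℝ := ∫ p in Omg L, (lap f p) ^ 2

/-- L² norm of the Laplacian over Ω. -/
def lapNrm (L : ℝ) (f : ℝ × ℝ → ℝ) : ℝ := Real.sqrt (lapNrmSq L f)

/-- Ω-periodic: L-periodic in x₁ and 2-periodic in x₂. -/
def OmgPeriodic (L : ℝ) (f : ℝ × ℝ → ℝ) : Prop :=
  (∀ x y : ℝ, f (x + L, y) = f (x, y)) ∧ (∀ x y : ℝ, f (x, y + 2) = f (x, y))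

/-- Divergence-free vector field. -/
def DivFree (u₁ u₂ : ℝ × ℝ → ℝ) : Prop := ∀ p, d1 u₁ p + d2 u₂ p = 0

/-- Symmetric vector field: first component even in x₂, second odd in x₂. -/
def Symm (u₁ u₂ : ℝ × ℝ → ℝ) : Prop :=
  (∀ x y : ℝ, u₁ (x, -y) = u₁ (x, y)) ∧ (∀ x y : ℝ, u₂ (x, -y) = -u₂ (x, y))

/-! ### Auxiliary lemmas -/

lemma contDiff_d1 {f : ℝ×ℝ→ℝ} (hf : ContDiff ℝ (⊤:ℕ∞) f) : ContDiff ℝ (⊤:ℕ∞) (d1 f) :=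
  (hf.fderiv_right (m := (⊤:ℕ∞)) (by exact_mod_cast le_top)).clm_apply contDiff_const

lemma contDiff_d2 {f : ℝ×ℝ→ℝ} (hf : ContDiff ℝ (⊤:ℕ∞) f) : ContDiff ℝ (⊤:ℕ∞) (d2 f) :=
  (hf.fderiv_right (m := (⊤:ℕ∞)) (by exact_mod_cast le_top)).clm_apply contDiff_const

lemma fderiv_shift {f : ℝ×ℝ→ℝ} {v : ℝ×ℝ} (hd : Differentiable ℝ f)
    (hp : ∀ p, f (p + v) = f p) (p : ℝ×ℝ) : fderiv ℝ f (p + v) = fderiv ℝ f p := by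
  have h0 : HasFDerivAt (fun q : ℝ×ℝ => q + v) (ContinuousLinearMap.id ℝ (ℝ×ℝ)) p :=
    (hasFDerivAt_id p).add_const v
  have h1 : HasFDerivAt (fun q : ℝ×ℝ => f (q + v))
      ((fderiv ℝ f (p + v)).comp (ContinuousLinearMap.id ℝ (ℝ×ℝ))) p :=
    (hd (p + v)).hasFDerivAt.comp p h0
  have h2 : (fun q : ℝ×ℝ => f (q + v)) = f := funext hp
  rw [h2, ContinuousLinearMap.comp_id] at h1
  exact h1.fderiv.symm

lemma integrableOn_Omg {L : ℝ} {f : ℝ×ℝ→ℝ} (hf : Continuous f) :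
    IntegrableOn f (Omg L) volume := by
  have hsub : Omg L ⊆ Set.Icc ((0:ℝ), (-1:ℝ)) (L, 1) := by
    rw [Set.Icc_prod_eq]
    exact Set.prod_mono Set.Ioo_subset_Icc_self Set.Ioo_subset_Icc_self
  exact (hf.continuousOn.integrableOn_compact isCompact_Icc).mono_set hsub

lemma memL2_Omg {L : ℝ} {f : ℝ×ℝ→ℝ} (hf : Continuous f) :
    MemLp f 2 (volume.restrict (Omg L)) := by
  have hsub : Omg L ⊆ Set.Icc ((0:ℝ), (-1:ℝ)) (L, 1) := by
    rw [Set.Icc_prod_eq]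
    exact Set.prod_mono Set.Ioo_subset_Icc_self Set.Ioo_subset_Icc_self
  haveI : IsFiniteMeasure (volume.restrict (Omg L)) := by
    constructor
    rw [Measure.restrict_apply_univ]
    exact lt_of_le_of_lt (measure_mono hsub) isCompact_Icc.measure_lt_top
  obtain ⟨C, hC⟩ := isCompact_Icc.exists_bound_of_continuousOn
    (s := Set.Icc ((0:ℝ), (-1:ℝ)) (L, 1)) hf.continuousOn
  have hmeas : MeasurableSet (Omg L) := (isOpen_Ioo.prod isOpen_Ioo).measurableSet
  refine MemLp.mono_exponent ?_ le_top
  exact memLp_top_of_bound hf.aestronglyMeasurable.restrict C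
    ((ae_restrict_iff' hmeas).2 (ae_of_all _ fun x hx => hC x (hsub hx)))

lemma integral_CS {α : Type*} {m : MeasurableSpace α} {μ' : Measure α} {u v : α → ℝ}
    (hu : MemLp u 2 μ') (hv : MemLp v 2 μ') :
    ∫ p, u p * v p ∂μ' ≤ Real.sqrt (∫ p, u p ^ 2 ∂μ') * Real.sqrt (∫ p, v p ^ 2 ∂μ') := by
  have h2 : (ENNReal.ofReal 2) = (2 : ENNReal) := by norm_num
  have hconj : (2:ℝ).HolderConjugate 2 := Real.HolderConjugate.two_two
  have hu' : MemLp (fun p => |u p|) (ENNReal.ofReal 2) μ' := by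
    rw [h2]; simpa [Real.norm_eq_abs] using hu.norm
  have hv' : MemLp (fun p => |v p|) (ENNReal.ofReal 2) μ' := by
    rw [h2]; simpa [Real.norm_eq_abs] using hv.norm
  have hH := integral_mul_le_Lp_mul_Lq_of_nonneg hconj
    (ae_of_all _ fun p => abs_nonneg (u p)) (ae_of_all _ fun p => abs_nonneg (v p)) hu' hv'
  have e1 : ∀ (w : α → ℝ) (p : α), |w p| ^ (2:ℝ) = w p ^ 2 := by
    intro w p
    rw [show (2:ℝ) = ((2:ℕ):ℝ) by norm_num, Real.rpow_natCast, sq_abs]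
  simp only [e1] at hH
  calc ∫ p, u p * v p ∂μ' ≤ ‖∫ p, u p * v p ∂μ'‖ := le_abs_self _
    _ ≤ ∫ p, ‖u p * v p‖ ∂μ' := norm_integral_le_integral_norm _
    _ = ∫ p, |u p| * |v p| ∂μ' := by simp [Real.norm_eq_abs, abs_mul]
    _ ≤ (∫ p, u p ^ 2 ∂μ') ^ ((1:ℝ)/2) * (∫ p, v p ^ 2 ∂μ') ^ ((1:ℝ)/2) := hH
    _ = Real.sqrt (∫ p, u p ^ 2 ∂μ') * Real.sqrt (∫ p, v p ^ 2 ∂μ') := by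
        rw [Real.sqrt_eq_rpow, Real.sqrt_eq_rpow]

lemma young_est (μ ν a s t X : ℝ) (hμ : 0 < μ) (hν : 0 < ν)
    (hs0 : 0 ≤ s) (ht0 : 0 ≤ t) (hX0 : 0 ≤ X)
    (hμa : μ * a ^ 2 ≤ ν / 32) (hμν : 2 * ν ≤ μ) (ht2 : t ^ 2 = s ^ 2 + 2 * X ^ 2) :
    μ * ((a * s + a ^ 2 * t) * X) ≤ μ / 8 * s ^ 2 + 3 * ν / 8 * X ^ 2 := by
  have e2 : (0:ℝ) ≤ μ / 16 * (s - 8 * a * X) ^ 2 := by positivity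
  have e3 : (0:ℝ) ≤ μ * a ^ 2 / 2 * (t - X) ^ 2 := by
    have : (0:ℝ) ≤ μ * a ^ 2 / 2 := by positivity
    exact mul_nonneg this (sq_nonneg _)
  have k1 : μ * a * (s * X) ≤ μ / 16 * s ^ 2 + 4 * (μ * a ^ 2) * X ^ 2 := by nlinarith [e2]
  have k2 : μ * a ^ 2 * (t * X) ≤ μ * a ^ 2 / 2 * t ^ 2 + μ * a ^ 2 / 2 * X ^ 2 := by
    nlinarith [e3]
  have k3 : μ * a ^ 2 / 2 * t ^ 2 = μ * a ^ 2 / 2 * s ^ 2 + μ * a ^ 2 * X ^ 2 := by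
    rw [ht2]; ring
  have k4 : μ * a ^ 2 * s ^ 2 ≤ ν / 32 * s ^ 2 := mul_le_mul_of_nonneg_right hμa (sq_nonneg s)
  have k5 : μ * a ^ 2 * X ^ 2 ≤ ν / 32 * X ^ 2 := mul_le_mul_of_nonneg_right hμa (sq_nonneg X)
  have k6 : ν * s ^ 2 ≤ μ / 2 * s ^ 2 :=
    mul_le_mul_of_nonneg_right (by linarith) (sq_nonneg s)
  have kgoal : μ * ((a * s + a ^ 2 * t) * X) = μ * a * (s * X) + μ * a ^ 2 * (t * X) := by ring
  have k7 : (0:ℝ) ≤ ν * X ^ 2 := mul_nonneg hν.le (sq_nonneg X)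
  have k8 : (0:ℝ) ≤ μ * s ^ 2 := mul_nonneg hμ.le (sq_nonneg s)
  have k9 : (0:ℝ) ≤ ν * s ^ 2 := mul_nonneg hν.le (sq_nonneg s)
  rw [kgoal]
  linarith

/-- Integration by parts on the periodic box: `∫ w Δw = -‖∇w‖²`. -/
lemma ibp (L : ℝ) (hL : 0 < L) (w : ℝ×ℝ→ℝ) (hw : ContDiff ℝ (⊤:ℕ∞) w)
    (hp : OmgPeriodic L w) :
    ∫ p in Omg L, w p * lap w p = - gradNrmSq L w := by
  have hdw : Differentiable ℝ w := hw.differentiable (by simp)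
  have hd1 : ContDiff ℝ (⊤:ℕ∞) (d1 w) := contDiff_d1 hw
  have hd2 : ContDiff ℝ (⊤:ℕ∞) (d2 w) := contDiff_d2 hw
  have hdd1 : Differentiable ℝ (d1 w) := hd1.differentiable (by simp)
  have hdd2 : Differentiable ℝ (d2 w) := hd2.differentiable (by simp)
  have hcw : Continuous w := hw.continuous
  have hc11 : Continuous (d1 (d1 w)) := (contDiff_d1 hd1).continuous
  have hc22 : Continuous (d2 (d2 w)) := (contDiff_d2 hd2).continuous
  set F : ℝ×ℝ → ℝ := fun p => w p * lap w p + ((d1 w p)^2 + (d2 w p)^2) with hF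
  have hcF : Continuous F := by
    apply Continuous.add
    · exact hcw.mul (hc11.add hc22)
    · exact ((hd1.continuous.pow 2).add (hd2.continuous.pow 2))
  set f : ℝ×ℝ → ℝ := fun p => w p * d1 w p with hf
  set g : ℝ×ℝ → ℝ := fun p => w p * d2 w p with hg
  set f' : ℝ×ℝ → (ℝ×ℝ →L[ℝ] ℝ) := fun p => w p • fderiv ℝ (d1 w) p + d1 w p • fderiv ℝ w p
  set g' : ℝ×ℝ → (ℝ×ℝ →L[ℝ] ℝ) := fun p => w p • fderiv ℝ (d2 w) p + d2 w p • fderiv ℝ w p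
  have hdf : ∀ p : ℝ×ℝ, HasFDerivAt f (f' p) p := fun p =>
    (hdw p).hasFDerivAt.mul (hdd1 p).hasFDerivAt
  have hdg : ∀ p : ℝ×ℝ, HasFDerivAt g (g' p) p := fun p =>
    (hdw p).hasFDerivAt.mul (hdd2 p).hasFDerivAt
  have hFeq : ∀ p : ℝ×ℝ, f' p (1, 0) + g' p (0, 1) = F p := by
    intro p
    simp only [f', g', F, ContinuousLinearMap.add_apply, ContinuousLinearMap.coe_smul',
      Pi.smul_apply, smul_eq_mul, lap, d1, d2]
    ring
  have hper1 : ∀ p : ℝ×ℝ, w (p + (L, 0)) = w p := by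
    rintro ⟨x, y⟩; simpa using hp.1 x y
  have hper2 : ∀ p : ℝ×ℝ, w (p + (0, 2)) = w p := by
    rintro ⟨x, y⟩; simpa using hp.2 x y
  have hfd1 := fderiv_shift hdw hper1
  have hfd2 := fderiv_shift hdw hper2
  have key := integral2_divergence_prod_of_hasFDerivAt_off_countable f g f' g'
    0 (-1) L 1 ∅ Set.countable_empty
    (hcw.mul hd1.continuous).continuousOn (hcw.mul hd2.continuous).continuousOn
    (fun p _ => hdf p) (fun p _ => hdg p)
    (by
      apply ContinuousOn.integrableOn_compact (isCompact_uIcc.prod isCompact_uIcc)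
      have : (fun x : ℝ×ℝ => f' x (1,0) + g' x (0,1)) = F := funext hFeq
      rw [this]
      exact hcF.continuousOn)
  have hb1 : ∀ x : ℝ, g (x, (1:ℝ)) = g (x, (-1:ℝ)) := by
    intro x
    have hx : ((x, (-1:ℝ)) : ℝ×ℝ) + (0, 2) = (x, 1) := by norm_num
    simp only [g]
    rw [← hx, hper2, d2, d2, hfd2]
  have hb2 : ∀ y : ℝ, f ((L:ℝ), y) = f ((0:ℝ), y) := by
    intro y
    have hx : ((0, y) : ℝ×ℝ) + (L, 0) = (L, y) := by norm_num
    simp only [f]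
    rw [← hx, hper1, d1, d1, hfd1]
  rw [show (∫ x in (0:ℝ)..L, g (x, 1)) = ∫ x in (0:ℝ)..L, g (x, -1) from
      intervalIntegral.integral_congr (fun x _ => hb1 x),
    show (∫ y in (-1:ℝ)..1, f (L, y)) = ∫ y in (-1:ℝ)..1, f (0, y) from
      intervalIntegral.integral_congr (fun y _ => hb2 y)] at key
  simp only [hFeq] at key
  have key2 : (∫ x in (0:ℝ)..L, ∫ y in (-1:ℝ)..1, F (x, y)) = 0 := by rw [key]; ring
  have hFint : IntegrableOn F (Omg L) volume := integrableOn_Omg hcF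
  have hFint' : IntegrableOn F (Set.Ioo (0:ℝ) L ×ˢ Set.Ioo (-1:ℝ) 1) (volume.prod volume) := by
    rw [← Measure.volume_eq_prod]; exact hFint
  have hset : ∫ p in Omg L, F p = ∫ x in Set.Ioo (0:ℝ) L, ∫ y in Set.Ioo (-1:ℝ) 1, F (x, y) := by
    rw [show Omg L = Set.Ioo (0:ℝ) L ×ˢ Set.Ioo (-1:ℝ) 1 from rfl, Measure.volume_eq_prod]
    exact setIntegral_prod F hFint'
  have hiter : (∫ x in (0:ℝ)..L, ∫ y in (-1:ℝ)..1, F (x, y))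
      = ∫ x in Set.Ioo (0:ℝ) L, ∫ y in Set.Ioo (-1:ℝ) 1, F (x, y) := by
    rw [intervalIntegral.integral_of_le hL.le,
      setIntegral_congr_set (Ioo_ae_eq_Ioc (a := (0:ℝ)) (b := L)).symm]
    apply setIntegral_congr_fun measurableSet_Ioo
    intro x _
    show (∫ y in (-1:ℝ)..1, F (x, y)) = ∫ y in Set.Ioo (-1:ℝ) 1, F (x, y)
    rw [intervalIntegral.integral_of_le (by norm_num : (-1:ℝ) ≤ 1)]
    exact setIntegral_congr_set (Ioo_ae_eq_Ioc (a := (-1:ℝ)) (b := 1)).symm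
  have hzero : ∫ p in Omg L, F p = 0 := by rw [hset, ← hiter, key2]
  have h1 : IntegrableOn (fun p => w p * lap w p) (Omg L) volume :=
    integrableOn_Omg (hcw.mul (hc11.add hc22))
  have h2 : IntegrableOn (fun p => (d1 w p)^2 + (d2 w p)^2) (Omg L) volume :=
    integrableOn_Omg ((hd1.continuous.pow 2).add (hd2.continuous.pow 2))
  have hadd : ∫ p in Omg L, F p
      = (∫ p in Omg L, w p * lap w p) + ∫ p in Omg L, ((d1 w p)^2 + (d2 w p)^2) :=
    integral_add h1 h2
  rw [hzero] at hadd
  rw [gradNrmSq]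
  linarith [hadd]

/-- estimate (3.36) of the paper for a second-order interpolant `J = I_h(w₁)`:
`μ(I_h(w₁), Δw₁) ≤ (3ν/8)‖Δw₁‖² + (μ/8)‖w₁‖² - (7μ/8)‖∇w₁‖²`. -/
theorem feedback_estimate_H1_second_order (L : ℝ) (hL : 0 < L) (μ ν c₀ h : ℝ)
    (hμ : 0 < μ) (hν : 0 < ν) (hc₀ : 0 < c₀) (hh : 0 < h)
    (hcond : 2 * μ * c₀ ^ 2 * h ^ 2 ≤ ν / 16) (hμν : 2 * ν ≤ μ)
    (w₁ J : ℝ × ℝ → ℝ) (hw₁ : ContDiff ℝ (⊤ : ℕ∞) w₁) (hpw₁ : OmgPeriodic L w₁)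
    (hJ : MemLp J 2 (volume.restrict (Omg L)))
    (happrox : nrm L (fun p => J p - w₁ p) ≤
      c₀ * h * Real.sqrt (nrmSq L w₁ + gradNrmSq L w₁)
        + c₀ ^ 2 * h ^ 2 * Real.sqrt (nrmSq L w₁ + gradNrmSq L w₁ + 2 * lapNrmSq L w₁)) :
    μ * ∫ p in Omg L, J p * lap w₁ p ≤
      3 * ν / 8 * lapNrmSq L w₁ + μ / 8 * nrmSq L w₁ - 7 * μ / 8 * gradNrmSq L w₁ := by
  have hclap : Continuous (lap w₁) :=
    ((contDiff_d1 (contDiff_d1 hw₁)).continuous).add ((contDiff_d2 (contDiff_d2 hw₁)).continuous)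
  have hmemw : MemLp w₁ 2 (volume.restrict (Omg L)) := memL2_Omg hw₁.continuous
  have hmemlap : MemLp (lap w₁) 2 (volume.restrict (Omg L)) := memL2_Omg hclap
  have hu : MemLp (fun p => J p - w₁ p) 2 (volume.restrict (Omg L)) := hJ.sub hmemw
  -- abbreviations
  set N := nrmSq L w₁ with hNdef
  set G := gradNrmSq L w₁ with hGdef
  set Λ := lapNrmSq L w₁ with hΛdef
  have hN : 0 ≤ N := integral_nonneg fun p => sq_nonneg _
  have hG : 0 ≤ G := integral_nonneg fun p => add_nonneg (sq_nonneg _) (sq_nonneg _)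
  have hΛ : 0 ≤ Λ := integral_nonneg fun p => sq_nonneg _
  set X := Real.sqrt Λ with hXdef
  set s := Real.sqrt (N + G) with hsdef
  set t := Real.sqrt (N + G + 2 * Λ) with htdef
  have hX0 : 0 ≤ X := Real.sqrt_nonneg _
  have hs0 : 0 ≤ s := Real.sqrt_nonneg _
  have ht0 : 0 ≤ t := Real.sqrt_nonneg _
  have hX2 : X ^ 2 = Λ := Real.sq_sqrt hΛ
  have hs2 : s ^ 2 = N + G := Real.sq_sqrt (add_nonneg hN hG)
  have ht2 : t ^ 2 = N + G + 2 * Λ := Real.sq_sqrt (by nlinarith)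
  -- Cauchy-Schwarz
  have hCS : (∫ p in Omg L, (J p - w₁ p) * lap w₁ p)
      ≤ nrm L (fun p => J p - w₁ p) * X := by
    have := integral_CS hu hmemlap
    simp only [nrm, nrmSq, hXdef, hΛdef, lapNrmSq]
    exact this
  -- split the integral
  have h1int : Integrable (fun p => (J p - w₁ p) * lap w₁ p) (volume.restrict (Omg L)) := by
    have hsmul : MemLp ((fun p => J p - w₁ p) • lap w₁) 1 (volume.restrict (Omg L)) :=
      hmemlap.smul hu
    have := memLp_one_iff_integrable.mp hsmul
    simpa [Pi.smul_apply, smul_eq_mul, Pi.mul_def] using this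
  have h2int : Integrable (fun p => w₁ p * lap w₁ p) (volume.restrict (Omg L)) :=
    integrableOn_Omg (hw₁.continuous.mul hclap)
  have hsplit : (∫ p in Omg L, J p * lap w₁ p)
      = (∫ p in Omg L, (J p - w₁ p) * lap w₁ p) + ∫ p in Omg L, w₁ p * lap w₁ p := by
    rw [← integral_add h1int h2int]
    congr 1
    funext p
    ring
  have hIBP : (∫ p in Omg L, w₁ p * lap w₁ p) = - G := ibp L hL w₁ hw₁ hpw₁
  -- put the pieces together
  have hB : nrm L (fun p => J p - w₁ p) ≤ c₀ * h * s + c₀ ^ 2 * h ^ 2 * t := happrox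
  have hI : (∫ p in Omg L, (J p - w₁ p) * lap w₁ p) ≤ (c₀ * h * s + c₀ ^ 2 * h ^ 2 * t) * X :=
    hCS.trans (mul_le_mul_of_nonneg_right hB hX0)
  have hμa : μ * (c₀ * h) ^ 2 ≤ ν / 32 := by nlinarith
  have hyoung : μ * ((c₀ * h * s + c₀ ^ 2 * h ^ 2 * t) * X) ≤ μ / 8 * (N + G) + 3 * ν / 8 * Λ := by
    set a := c₀ * h with hadef
    have e1 : c₀ ^ 2 * h ^ 2 = a ^ 2 := by rw [hadef]; ring
    have ht2' : t ^ 2 = s ^ 2 + 2 * X ^ 2 := by rw [ht2, hs2, hX2]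
    rw [e1, ← hs2, ← hX2]
    exact young_est μ ν a s t X hμ hν hs0 ht0 hX0 hμa hμν ht2'
  have hμI : μ * (∫ p in Omg L, (J p - w₁ p) * lap w₁ p)
      ≤ μ * ((c₀ * h * s + c₀ ^ 2 * h ^ 2 * t) * X) := mul_le_mul_of_nonneg_left hI hμ.le
  rw [hsplit, hIBP]
  have : μ * ((∫ p in Omg L, (J p - w₁ p) * lap w₁ p) + -G)
      = μ * (∫ p in Omg L, (J p - w₁ p) * lap w₁ p) - μ * G := by ring
  rw [this]
  linarith
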